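/- Let A be a real n×n symmetric positive definite matrix, P a real n×s matrix with linearly independent columns, c, xₖ ∈ ℝⁿ, rₖ = c − A xₖ, and let αₖ ∈ ℝˢ be the solution of Pᵀ A P αₖ = Pᵀ rₖ. Define Φ(x) = ½⟨x, A x⟩ − ⟨x, c⟩ and xₖ₊₁ = xₖ + P αₖ. Then Φ(xₖ) − Φ(xₖ₊₁) = ½⟨αₖ, Pᵀ rₖ⟩ ≥ 0, and Φ(xₖ₊₁) < Φ(xₖ) if and only if Pᵀ rₖ ≠ 0. -/
import Mathlib


open Matrix

/-- Monotone decrease of the energy functional: with `αₖ` solving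
`Pᵀ A P αₖ = Pᵀ rₖ` and `xₖ₊₁ = xₖ + P αₖ`, one has
`Φ(xₖ) − Φ(xₖ₊₁) = ½⟨αₖ, Pᵀ rₖ⟩ ≥ 0`, with strict decrease iff `Pᵀ rₖ ≠ 0`. -/
theorem stmt7 {n s : ℕ} (A : Matrix (Fin n) (Fin n) ℝ)
    (hAsym : Aᵀ = A)
    (hApd : ∀ x : Fin n → ℝ, x ≠ 0 → 0 < x ⬝ᵥ (A *ᵥ x))
    (P : Matrix (Fin n) (Fin s) ℝ)
    (hP : Function.Injective fun α : Fin s → ℝ => P *ᵥ α)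
    (c xk rk : Fin n → ℝ) (hrk : rk = c - A *ᵥ xk)
    (αk : Fin s → ℝ) (hαk : (Pᵀ * A * P) *ᵥ αk = Pᵀ *ᵥ rk)
    (Φ : (Fin n → ℝ) → ℝ)
    (hΦ : ∀ x, Φ x = (1 / 2) * (x ⬝ᵥ (A *ᵥ x)) - x ⬝ᵥ c)
    (xk1 : Fin n → ℝ) (hx : xk1 = xk + P *ᵥ αk) :
    Φ xk - Φ xk1 = (1 / 2) * (αk ⬝ᵥ (Pᵀ *ᵥ rk)) ∧
    0 ≤ (1 / 2) * (αk ⬝ᵥ (Pᵀ *ᵥ rk)) ∧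
    (Φ xk1 < Φ xk ↔ Pᵀ *ᵥ rk ≠ 0) := by
  set p : Fin n → ℝ := P *ᵥ αk with hp
  -- key dot product identity
  have hdot : αk ⬝ᵥ (Pᵀ *ᵥ rk) = p ⬝ᵥ rk := by
    rw [Matrix.dotProduct_mulVec, Matrix.vecMul_transpose]
  have hdotA : αk ⬝ᵥ ((Pᵀ * A * P) *ᵥ αk) = p ⬝ᵥ (A *ᵥ p) := by
    rw [show (Pᵀ * A * P) *ᵥ αk = Pᵀ *ᵥ (A *ᵥ p) by
      simp [hp, Matrix.mulVec_mulVec, Matrix.mul_assoc]]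
    rw [Matrix.dotProduct_mulVec, Matrix.vecMul_transpose]
  have key : p ⬝ᵥ (A *ᵥ p) = p ⬝ᵥ rk := by
    rw [← hdotA, hαk, hdot]
  have hsymm : ∀ u v : Fin n → ℝ, u ⬝ᵥ (A *ᵥ v) = v ⬝ᵥ (A *ᵥ u) := by
    intro u v
    rw [Matrix.dotProduct_mulVec, ← Matrix.mulVec_transpose, hAsym,
      dotProduct_comm]
  have hdiff : Φ xk - Φ xk1 = (1 / 2) * (αk ⬝ᵥ (Pᵀ *ᵥ rk)) := by
    rw [hΦ, hΦ, hx, hdot, hrk]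
    have h1 : (xk + p) ⬝ᵥ (A *ᵥ (xk + p))
        = xk ⬝ᵥ (A *ᵥ xk) + 2 * (p ⬝ᵥ (A *ᵥ xk)) + p ⬝ᵥ (A *ᵥ p) := by
      simp only [Matrix.mulVec_add, add_dotProduct,
        dotProduct_add, hsymm xk p]
      ring
    rw [h1, add_dotProduct xk p c, dotProduct_sub]
    have h2 : p ⬝ᵥ (c - A *ᵥ xk) = p ⬝ᵥ c - p ⬝ᵥ (A *ᵥ xk) := by
      simp [dotProduct_sub]
    rw [hrk, h2] at key
    linarith [key]
  have hnonneg : 0 ≤ αk ⬝ᵥ (Pᵀ *ᵥ rk) := by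
    rw [hdot, ← key]
    by_cases hp0 : p = 0
    · simp [hp0]
    · exact le_of_lt (hApd p hp0)
  have hpos : Pᵀ *ᵥ rk ≠ 0 → 0 < αk ⬝ᵥ (Pᵀ *ᵥ rk) := by
    intro hne
    have hα0 : αk ≠ 0 := by
      intro h; apply hne; rw [← hαk, h, Matrix.mulVec_zero]
    have hp0 : p ≠ 0 := by
      intro h
      exact hα0 (hP (by simpa [Matrix.mulVec_zero] using h))
    rw [hdot, ← key]
    exact hApd p hp0
  refine ⟨hdiff, by linarith, ?_⟩
  constructor
  · intro hlt h0
    rw [h0] at hdiff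
    simp at hdiff
    linarith
  · intro hne
    have := hpos hne
    linarith
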